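/- Let X ∈ M₃(ℂ) be Hermitian and set μ = (1/3)·(Re tr(X) − (3/2)·√(λ₁²·(Re tr(X J₁))² + λ₂²·(Re tr(X J₂))² + λ₃²·(Re tr(X J₃))²)). Then Φ(X) − μ·I₃ is positive semidefinite and μ is an eigenvalue of Φ(X) (i.e., there exists a nonzero v ∈ ℂ³ with Φ(X)·v = μ·v); that is, μ is the minimal eigenvalue of Φ(X). -/

import Mathlib

open Matrix Kronecker
open scoped ComplexOrder

/-- The spin-1 angular momentum matrix J₁. -/
noncomputable def spinOneJ1 : Matrix (Fin 3) (Fin 3) ℂ :=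
  ((1 / Real.sqrt 2 : ℝ) : ℂ) • !![0, 1, 0; 1, 0, 1; 0, 1, 0]

/-- The spin-1 angular momentum matrix J₂. -/
noncomputable def spinOneJ2 : Matrix (Fin 3) (Fin 3) ℂ :=
  ((1 / Real.sqrt 2 : ℝ) : ℂ) • !![0, -Complex.I, 0; Complex.I, 0, -Complex.I; 0, Complex.I, 0]

/-- The spin-1 angular momentum matrix J₃. -/
def spinOneJ3 : Matrix (Fin 3) (Fin 3) ℂ := !![1, 0, 0; 0, 0, 0; 0, 0, -1]

/-- The spin-1 polarization-scaling map
`Φ(X) = (1/3)·tr(X)·I₃ + (1/2)·Σᵢ λᵢ·tr(X Jᵢ)·Jᵢ`. -/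
noncomputable def Phi3 (l1 l2 l3 : ℝ) (X : Matrix (Fin 3) (Fin 3) ℂ) :
    Matrix (Fin 3) (Fin 3) ℂ :=
  (1 / 3 : ℂ) • X.trace • (1 : Matrix (Fin 3) (Fin 3) ℂ) +
    (1 / 2 : ℂ) • ((l1 : ℂ) • (X * spinOneJ1).trace • spinOneJ1 +
      (l2 : ℂ) • (X * spinOneJ2).trace • spinOneJ2 +
      (l3 : ℂ) • (X * spinOneJ3).trace • spinOneJ3)

/-! ### Auxiliary definitions and lemmas -/

noncomputable def qC : ℂ := ((1 / Real.sqrt 2 : ℝ) : ℂ)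

lemma hq2 : qC ^ 2 = 1 / 2 := by
  rw [qC, ← Complex.ofReal_pow]
  norm_num [Real.sq_sqrt]

lemma conj_qC : (starRingEnd ℂ) qC = qC := Complex.conj_ofReal _

lemma J1H : spinOneJ1ᴴ = spinOneJ1 := by
  ext i j; fin_cases i <;> fin_cases j <;>
    simp [spinOneJ1, Matrix.conjTranspose_apply]

lemma J2H : spinOneJ2ᴴ = spinOneJ2 := by
  ext i j; fin_cases i <;> fin_cases j <;>
    simp [spinOneJ2, Matrix.conjTranspose_apply]

lemma J3H : spinOneJ3ᴴ = spinOneJ3 := by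
  ext i j; fin_cases i <;> fin_cases j <;>
    simp [spinOneJ3, Matrix.conjTranspose_apply, Matrix.vecHead, Matrix.vecTail]

lemma traceReal (X J : Matrix (Fin 3) (Fin 3) ℂ) (hX : X.IsHermitian) (hJ : Jᴴ = J) :
    (X * J).trace = ((X * J).trace.re : ℂ) := by
  have h1 : (starRingEnd ℂ) (X * J).trace = (X * J).trace := by
    have h : (X * J)ᴴ.trace = star (X * J).trace := Matrix.trace_conjTranspose _
    rw [Matrix.conjTranspose_mul, hJ, hX.eq, Matrix.trace_mul_comm] at h
    simpa using h.symm
  exact (Complex.conj_eq_iff_re.mp h1).symm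

/-- `N = r·1 + a·J₁ + b·J₂ + c·J₃` written out explicitly. -/
noncomputable def Nm (a b c r : ℝ) : Matrix (Fin 3) (Fin 3) ℂ :=
  !![(r : ℂ) + c, qC * ((a : ℂ) - (b : ℂ) * Complex.I), 0;
     qC * ((a : ℂ) + (b : ℂ) * Complex.I), (r : ℂ), qC * ((a : ℂ) - (b : ℂ) * Complex.I);
     0, qC * ((a : ℂ) + (b : ℂ) * Complex.I), (r : ℂ) - c]

noncomputable def gv (a b c : ℝ) : Fin 3 → ℂ :=
  ![-(qC * ((a : ℂ) - (b : ℂ) * Complex.I)), (c : ℂ), qC * ((a : ℂ) + (b : ℂ) * Complex.I)]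

noncomputable def gw (a b c : ℝ) : Fin 3 → ℂ :=
  ![-(qC * ((a : ℂ) + (b : ℂ) * Complex.I)), (c : ℂ), qC * ((a : ℂ) - (b : ℂ) * Complex.I)]

set_option maxHeartbeats 1000000 in
lemma Km_N (a b c r : ℝ) :
    Nm a b c r = ((r : ℝ) : ℂ) • (1 : Matrix (Fin 3) (Fin 3) ℂ) +
      ((a : ℂ) • spinOneJ1 + (b : ℂ) • spinOneJ2 + (c : ℂ) • spinOneJ3) := by
  ext i j; fin_cases i <;> fin_cases j <;>
    simp [Nm, qC, spinOneJ1, spinOneJ2, spinOneJ3, Matrix.one_apply,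
      Matrix.vecHead, Matrix.vecTail] <;> ring

set_option maxHeartbeats 1000000 in
lemma NmH (a b c r : ℝ) : (Nm a b c r).IsHermitian := by
  rw [Matrix.IsHermitian]
  ext i j; fin_cases i <;> fin_cases j <;>
    simp [Nm, Matrix.conjTranspose_apply, Matrix.vecHead, Matrix.vecTail, conj_qC] <;>
    first | ring1 | (left; trivial)

set_option maxHeartbeats 2000000 in
lemma key_id (a b c r : ℝ) (hr : r ^ 2 = a ^ 2 + b ^ 2 + c ^ 2) :
    ((2 * r : ℝ) : ℂ) • Nm a b c r =
      Nm a b c r * Nm a b c r + vecMulVec (gv a b c) (gw a b c) := by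
  have hrC : (r : ℂ) ^ 2 = (a : ℂ) ^ 2 + (b : ℂ) ^ 2 + (c : ℂ) ^ 2 := by
    exact_mod_cast congrArg (Complex.ofReal) hr
  ext i j; fin_cases i <;> fin_cases j <;>
    simp [Nm, gv, gw, Matrix.mul_apply, Fin.sum_univ_three, Matrix.vecMulVec_apply,
      Matrix.vecHead, Matrix.vecTail] <;>
    first
      | ring1
      | linear_combination hrC - 2*((a:ℂ)^2+(b:ℂ)^2)*hq2 + 2*qC^2*(b:ℂ)^2*Complex.I_sq

lemma star_gw (a b c : ℝ) : star (gw a b c) = gv a b c := by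
  funext i; fin_cases i <;>
    simp [gv, gw, Matrix.vecHead, Matrix.vecTail, conj_qC] <;> (left; ring)

/-- The eigenvector for the lowest eigenvalue (generic case). -/
noncomputable def vv (a b c r : ℝ) : Fin 3 → ℂ :=
  ![((a : ℂ) - (b : ℂ) * Complex.I) ^ 2,
    -2 * qC * ((a : ℂ) - (b : ℂ) * Complex.I) * ((r : ℂ) + c),
    ((r : ℂ) + c) ^ 2]

set_option maxHeartbeats 1000000 in
lemma eig (a b c r : ℝ) (hr : r ^ 2 = a ^ 2 + b ^ 2 + c ^ 2) :
    Nm a b c r *ᵥ vv a b c r = 0 := by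
  have hrC : (r : ℂ) ^ 2 = (a : ℂ) ^ 2 + (b : ℂ) ^ 2 + (c : ℂ) ^ 2 := by
    exact_mod_cast congrArg (Complex.ofReal) hr
  funext i; fin_cases i <;>
    simp [Nm, vv, Matrix.mulVec, dotProduct, Fin.sum_univ_three,
      Matrix.vecHead, Matrix.vecTail] <;>
    first
      | ring1
      | linear_combination (-2*(((a:ℂ) - b*Complex.I)^2)*((r:ℂ)+c))*hq2
      | linear_combination (-qC*((a:ℂ) - b*Complex.I))*hrC -
          qC*((a:ℂ) - b*Complex.I)*(b:ℂ)^2*Complex.I_sq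
      | linear_combination (((r:ℂ)+c))*hrC - 2*((a:ℂ)^2-(b:ℂ)^2*Complex.I^2)*((r:ℂ)+c)*hq2 +
          (b:ℂ)^2*((r:ℂ)+c)*Complex.I_sq

lemma vmv (g w x : Fin 3 → ℂ) : vecMulVec g w *ᵥ x = (w ⬝ᵥ x) • g := by
  funext i
  simp [Matrix.mulVec, Matrix.vecMulVec_apply, dotProduct, Fin.sum_univ_three]
  ring

set_option maxHeartbeats 4000000 in
theorem minimal_eigenvalue_of_spin_one_map (l1 l2 l3 : ℝ)
    (X : Matrix (Fin 3) (Fin 3) ℂ) (hX : X.IsHermitian)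
    (mu : ℝ)
    (hmu : mu = (1 / 3) * (X.trace.re -
      (3 / 2) * Real.sqrt (l1 ^ 2 * ((X * spinOneJ1).trace.re) ^ 2 +
        l2 ^ 2 * ((X * spinOneJ2).trace.re) ^ 2 +
        l3 ^ 2 * ((X * spinOneJ3).trace.re) ^ 2))) :
    (Phi3 l1 l2 l3 X - (mu : ℂ) • (1 : Matrix (Fin 3) (Fin 3) ℂ)).PosSemidef ∧
    ∃ v : Fin 3 → ℂ, v ≠ 0 ∧ Phi3 l1 l2 l3 X *ᵥ v = (mu : ℂ) • v := by
  set t1 : ℝ := (X * spinOneJ1).trace.re with ht1def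
  set t2 : ℝ := (X * spinOneJ2).trace.re with ht2def
  set t3 : ℝ := (X * spinOneJ3).trace.re with ht3def
  have ht1 : (X * spinOneJ1).trace = (t1 : ℂ) := traceReal X _ hX J1H
  have ht2 : (X * spinOneJ2).trace = (t2 : ℂ) := traceReal X _ hX J2H
  have ht3 : (X * spinOneJ3).trace = (t3 : ℂ) := traceReal X _ hX J3H
  have htX : X.trace = (X.trace.re : ℂ) := by
    have h1 : (starRingEnd ℂ) X.trace = X.trace := by
      have h : Xᴴ.trace = star X.trace := Matrix.trace_conjTranspose _
      rw [hX.eq] at h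
      simpa using h.symm
    exact (Complex.conj_eq_iff_re.mp h1).symm
  set T : ℝ := X.trace.re with hTdef
  set a : ℝ := l1 * t1 with hadef
  set b : ℝ := l2 * t2 with hbdef
  set c : ℝ := l3 * t3 with hcdef
  set r : ℝ := Real.sqrt (a ^ 2 + b ^ 2 + c ^ 2) with hrdef
  have hr0 : 0 ≤ r := Real.sqrt_nonneg _
  have hr2 : r ^ 2 = a ^ 2 + b ^ 2 + c ^ 2 := by
    rw [hrdef]
    exact Real.sq_sqrt (by positivity)
  have hmu' : mu = T / 3 - r / 2 := by
    rw [hmu, hrdef]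
    have harg : l1 ^ 2 * t1 ^ 2 + l2 ^ 2 * t2 ^ 2 + l3 ^ 2 * t3 ^ 2
        = a ^ 2 + b ^ 2 + c ^ 2 := by
      rw [hadef, hbdef, hcdef]; ring
    rw [harg]; ring
  have hPhi : Phi3 l1 l2 l3 X = ((T / 3 : ℝ) : ℂ) • (1 : Matrix (Fin 3) (Fin 3) ℂ) +
      (1 / 2 : ℂ) • ((a : ℂ) • spinOneJ1 + (b : ℂ) • spinOneJ2 + (c : ℂ) • spinOneJ3) := by
    rw [Phi3, ht1, ht2, ht3, htX, hadef, hbdef, hcdef]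
    push_cast
    match_scalars <;> ring
  have hMdiff : Phi3 l1 l2 l3 X - (mu : ℂ) • (1 : Matrix (Fin 3) (Fin 3) ℂ)
      = (1 / 2 : ℂ) • Nm a b c r := by
    rw [hPhi, Km_N a b c r, hmu']
    push_cast
    match_scalars <;> ring
  have hPhiEq : Phi3 l1 l2 l3 X = (mu : ℂ) • (1 : Matrix (Fin 3) (Fin 3) ℂ) +
      (1 / 2 : ℂ) • Nm a b c r := by
    rw [← hMdiff]; abel
  have half_nonneg : (0 : ℂ) ≤ 1 / 2 := by
    rw [show ((1 : ℂ)/2) = ((1/2 : ℝ) : ℂ) by norm_num]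
    exact Complex.zero_le_real.mpr (by norm_num)
  have hQ : ∀ x : Fin 3 → ℂ, 0 ≤ star x ⬝ᵥ (Nm a b c r *ᵥ x) := by
    intro x
    rcases eq_or_lt_of_le hr0 with hz | hpos
    · have ha0 : a = 0 := by nlinarith [sq_nonneg a, sq_nonneg b, sq_nonneg c]
      have hb0 : b = 0 := by nlinarith [sq_nonneg a, sq_nonneg b, sq_nonneg c]
      have hc0 : c = 0 := by nlinarith [sq_nonneg a, sq_nonneg b, sq_nonneg c]
      have hN0 : Nm a b c r = 0 := by
        ext i j; fin_cases i <;> fin_cases j <;>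
          simp [Nm, ha0, hb0, hc0, (show r = 0 from hz.symm), Matrix.vecHead, Matrix.vecTail]
      rw [hN0]
      simp
    · have hge : 0 ≤ ((2 * r : ℝ) : ℂ) * (star x ⬝ᵥ (Nm a b c r *ᵥ x)) := by
        have e1 : ((2 * r : ℝ) : ℂ) * (star x ⬝ᵥ (Nm a b c r *ᵥ x))
            = star x ⬝ᵥ ((((2 * r : ℝ) : ℂ) • Nm a b c r) *ᵥ x) := by
          rw [Matrix.smul_mulVec, dotProduct_smul, smul_eq_mul]
        rw [e1, key_id a b c r hr2, Matrix.add_mulVec, dotProduct_add]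
        apply add_nonneg
        · rw [← Matrix.mulVec_mulVec, Matrix.dotProduct_mulVec,
            show star x ᵥ* Nm a b c r = star (Nm a b c r *ᵥ x) by
              rw [Matrix.star_mulVec, (NmH a b c r).eq]]
          exact dotProduct_star_self_nonneg _
        · rw [vmv, dotProduct_smul, smul_eq_mul,
            show star x ⬝ᵥ gv a b c = star (gw a b c ⬝ᵥ x) by
              rw [← star_gw a b c, star_dotProduct_star]]
          exact mul_star_self_nonneg _
      have hinv : (0 : ℂ) ≤ (((2 * r : ℝ) : ℂ))⁻¹ := by
        rw [← Complex.ofReal_inv]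
        exact Complex.zero_le_real.mpr (by positivity)
      have h2rne : ((2 * r : ℝ) : ℂ) ≠ 0 := by
        simpa using (by positivity : (2 * r : ℝ) ≠ 0)
      calc (0 : ℂ) ≤ (((2 * r : ℝ) : ℂ))⁻¹ * (((2 * r : ℝ) : ℂ) * (star x ⬝ᵥ (Nm a b c r *ᵥ x))) :=
            mul_nonneg hinv hge
        _ = star x ⬝ᵥ (Nm a b c r *ᵥ x) := by
            field_simp
  constructor
  · rw [hMdiff, Matrix.posSemidef_iff_dotProduct_mulVec]
    constructor
    · rw [Matrix.IsHermitian, Matrix.conjTranspose_smul, (NmH a b c r).eq]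
      congr 1
      simp
    · intro x
      rw [Matrix.smul_mulVec, dotProduct_smul, smul_eq_mul]
      exact mul_nonneg half_nonneg (hQ x)
  · by_cases hdeg : a = 0 ∧ b = 0 ∧ r + c = 0
    · refine ⟨![1, 0, 0], ?_, ?_⟩
      · intro h
        have := congrFun h 0
        simp at this
      · have hNv : Nm a b c r *ᵥ ![1, 0, 0] = 0 := by
          have hrc : ((r : ℂ) + c) = 0 := by
            rw [← Complex.ofReal_add]
            exact_mod_cast hdeg.2.2
          funext i; fin_cases i <;>
            simp [Nm, Matrix.mulVec, dotProduct, Fin.sum_univ_three,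
              hdeg.1, hdeg.2.1, Matrix.vecHead, Matrix.vecTail, hrc]
        rw [hPhiEq, Matrix.add_mulVec, Matrix.smul_mulVec, Matrix.smul_mulVec,
          Matrix.one_mulVec, hNv]
        simp
    · refine ⟨vv a b c r, ?_, ?_⟩
      · intro h
        apply hdeg
        have h0 := congrFun h 0
        have h2 := congrFun h 2
        simp only [vv, Matrix.cons_val_zero, Matrix.cons_val_two, Matrix.tail_cons,
          Matrix.head_cons, Pi.zero_apply] at h0 h2
        have hab : (a : ℂ) - (b : ℂ) * Complex.I = 0 :=
          pow_eq_zero_iff (n := 2) (by norm_num) |>.mp h0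
        have hrc : (r : ℂ) + (c : ℂ) = 0 :=
          pow_eq_zero_iff (n := 2) (by norm_num) |>.mp h2
        refine ⟨?_, ?_, ?_⟩
        · simpa using congrArg Complex.re hab
        · simpa using congrArg Complex.im hab
        · simpa using congrArg Complex.re hrc
      · rw [hPhiEq, Matrix.add_mulVec, Matrix.smul_mulVec, Matrix.smul_mulVec,
          Matrix.one_mulVec, eig a b c r hr2]
        simp
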